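/- Let A and B be n×n complex strictly contractive matrices, i.e., I − A*A and I − B*B are positive definite. Then |det(I − A*B)|^2 ≥ det(I − A*A) · det(I − B*B) + |det(A − B)|^2 + (2^n − 2) · (det(I − A*A) · det(I − B*B))^{1/2} · |det(A − B)|. -/

import Mathlib

open Matrix
open scoped ComplexOrder

/-- The `t`-th largest eigenvalue (0-indexed) of a Hermitian matrix
(junk value `0` if the matrix is not Hermitian). -/
noncomputable def eigval {n : ℕ} (A : Matrix (Fin n) (Fin n) ℂ) (t : Fin n) : ℝ :=
  if h : A.IsHermitian then h.eigenvalues (Tuple.sort h.eigenvalues t.rev) else 0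

/-- The `t`-th largest singular value (0-indexed) of a square complex matrix. -/
noncomputable def singval {n : ℕ} (X : Matrix (Fin n) (Fin n) ℂ) (t : Fin n) : ℝ :=
  Real.sqrt (eigval (Xᴴ * X) t)

lemma hua_cs {m : Type*} [Fintype m] (x y : m → ℂ) :
    ‖dotProduct (star x) y‖ ^ 2 ≤
      (dotProduct (star x) x).re * (dotProduct (star y) y).re := by
  have h := norm_inner_le_norm (𝕜 := ℂ) ((WithLp.equiv 2 (m → ℂ)).symm x)
      ((WithLp.equiv 2 (m → ℂ)).symm y)
  rw [show inner ℂ ((WithLp.equiv 2 (m → ℂ)).symm x) ((WithLp.equiv 2 (m → ℂ)).symm y)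
      = dotProduct (star x) y from by rw [dotProduct_comm]; rfl] at h
  have hx : (dotProduct (star x) x).re = ‖(WithLp.equiv 2 (m → ℂ)).symm x‖ ^ 2 := by
    have h' := inner_self_eq_norm_sq (𝕜 := ℂ) ((WithLp.equiv 2 (m → ℂ)).symm x)
    rw [show inner ℂ ((WithLp.equiv 2 (m → ℂ)).symm x) ((WithLp.equiv 2 (m → ℂ)).symm x)
      = dotProduct (star x) x from by rw [dotProduct_comm]; rfl] at h'
    simpa using h'
  have hy : (dotProduct (star y) y).re = ‖(WithLp.equiv 2 (m → ℂ)).symm y‖ ^ 2 := by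
    have h' := inner_self_eq_norm_sq (𝕜 := ℂ) ((WithLp.equiv 2 (m → ℂ)).symm y)
    rw [show inner ℂ ((WithLp.equiv 2 (m → ℂ)).symm y) ((WithLp.equiv 2 (m → ℂ)).symm y)
      = dotProduct (star y) y from by rw [dotProduct_comm]; rfl] at h'
    simpa using h'
  rw [hx, hy]
  calc ‖dotProduct (star x) y‖ ^ 2
      ≤ (‖(WithLp.equiv 2 (m → ℂ)).symm x‖ * ‖(WithLp.equiv 2 (m → ℂ)).symm y‖) ^ 2 := by
        apply pow_le_pow_left₀ (norm_nonneg _) h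
    _ = _ := by ring

lemma hua_prod_one_add_ge {ι : Type*} (s : Finset ι) (f : ι → ℝ) (hf : ∀ i ∈ s, 0 ≤ f i) :
    1 + ∏ i ∈ s, f i + ((2:ℝ) ^ s.card - 2) * Real.sqrt (∏ i ∈ s, f i) ≤
      ∏ i ∈ s, (1 + f i) := by
  induction s using Finset.cons_induction with
  | empty => norm_num
  | cons a s ha ih =>
    have ht : 0 ≤ f a := hf a (Finset.mem_cons_self a s)
    have hp : 0 ≤ ∏ i ∈ s, f i := Finset.prod_nonneg fun i hi => hf i (Finset.mem_cons_of_mem hi)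
    have ih' := ih fun i hi => hf i (Finset.mem_cons_of_mem hi)
    rw [Finset.prod_cons, Finset.prod_cons, Finset.card_cons]
    rcases s.eq_empty_or_nonempty with rfl | hs
    · norm_num
    · have hsp : Real.sqrt (∏ i ∈ s, f i) ^ 2 = ∏ i ∈ s, f i := Real.sq_sqrt hp
      have hst : Real.sqrt (f a) ^ 2 = f a := Real.sq_sqrt ht
      have hsqrtmul : Real.sqrt (f a * ∏ i ∈ s, f i)
          = Real.sqrt (f a) * Real.sqrt (∏ i ∈ s, f i) := Real.sqrt_mul ht _
      have hc : (0:ℝ) ≤ (2:ℝ) ^ s.card - 2 := by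
        have h1 : 1 ≤ s.card := Finset.one_le_card.mpr hs
        have : (2:ℝ) ^ 1 ≤ (2:ℝ) ^ s.card := pow_le_pow_right₀ (by norm_num) h1
        simpa using this
      have key : (1 + f a) * (1 + (∏ i ∈ s, f i) + ((2:ℝ) ^ s.card - 2) * Real.sqrt (∏ i ∈ s, f i))
          ≤ (1 + f a) * ∏ i ∈ s, (1 + f i) :=
        mul_le_mul_of_nonneg_left ih' (by linarith)
      refine le_trans ?_ key
      rw [hsqrtmul, pow_succ]
      have A1 : 2 * (Real.sqrt (f a) * Real.sqrt (∏ i ∈ s, f i)) ≤ f a + ∏ i ∈ s, f i := by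
        nlinarith [sq_nonneg (Real.sqrt (f a) - Real.sqrt (∏ i ∈ s, f i))]
      have A1' : 2 * Real.sqrt (f a) ≤ 1 + f a := by
        nlinarith [sq_nonneg (1 - Real.sqrt (f a))]
      have A2 : ((2:ℝ) ^ s.card - 2) * Real.sqrt (∏ i ∈ s, f i) * (2 * Real.sqrt (f a))
          ≤ ((2:ℝ) ^ s.card - 2) * Real.sqrt (∏ i ∈ s, f i) * (1 + f a) :=
        mul_le_mul_of_nonneg_left A1' (mul_nonneg hc (Real.sqrt_nonneg _))
      nlinarith [A1, A2]

lemma hua_real_of_pos {z : ℂ} (hz : 0 < z) : z = (z.re : ℂ) ∧ 0 < z.re := by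
  rw [Complex.lt_def] at hz
  obtain ⟨h1, h2⟩ := hz
  refine ⟨Complex.ext rfl ?_, by simpa using h1⟩
  simpa using h2.symm

lemma hua_quad {n : ℕ} (M : Matrix (Fin n) (Fin n) ℂ) (x : Fin n → ℂ) :
    dotProduct (star x) ((1 - Mᴴ * M) *ᵥ x)
      = dotProduct (star x) x - dotProduct (star (M *ᵥ x)) (M *ᵥ x) := by
  rw [Matrix.sub_mulVec, dotProduct_sub, Matrix.one_mulVec]
  congr 1
  rw [← Matrix.mulVec_mulVec, Matrix.dotProduct_mulVec, Matrix.star_mulVec]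

lemma hua_flip {n : ℕ} {A : Matrix (Fin n) (Fin n) ℂ}
    (hA : (1 - Aᴴ * A).PosDef) : (1 - A * Aᴴ).PosDef := by
  rw [Matrix.posDef_iff_dotProduct_mulVec]
  constructor
  · exact Matrix.isHermitian_one.sub (Matrix.isHermitian_mul_conjTranspose_self A)
  · intro x hx
    have e1 := hua_quad Aᴴ x
    rw [Matrix.conjTranspose_conjTranspose] at e1
    rw [e1]
    rcases eq_or_ne (Aᴴ *ᵥ x) 0 with hy0 | hy0
    · rw [hy0]
      simpa using dotProduct_star_self_pos_iff.mpr hx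
    · have hAy := hA.dotProduct_mulVec_pos hy0
      rw [hua_quad A (Aᴴ *ᵥ x)] at hAy
      have hbeta : dotProduct (star (Aᴴ *ᵥ x)) (Aᴴ *ᵥ x)
          = dotProduct (star (A *ᵥ (Aᴴ *ᵥ x))) x := by
        simp only [Matrix.dotProduct_mulVec, Matrix.star_mulVec,
          Matrix.conjTranspose_conjTranspose, Matrix.vecMul_vecMul]
      have halpha : 0 < dotProduct (star x) x :=
        dotProduct_star_self_pos_iff.mpr hx
      have hbpos : 0 < dotProduct (star (Aᴴ *ᵥ x)) (Aᴴ *ᵥ x) :=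
        dotProduct_star_self_pos_iff.mpr hy0
      have hgnn : 0 ≤ dotProduct (star (A *ᵥ (Aᴴ *ᵥ x))) (A *ᵥ (Aᴴ *ᵥ x)) :=
        dotProduct_star_self_nonneg _
      have hcs := hua_cs (A *ᵥ (Aᴴ *ᵥ x)) x
      rw [← hbeta] at hcs
      rw [Complex.lt_def] at halpha hbpos hAy ⊢
      rw [Complex.le_def] at hgnn
      simp only [Complex.zero_re, Complex.zero_im, Complex.sub_re, Complex.sub_im]
        at halpha hbpos hAy hgnn ⊢
      obtain ⟨ha1, ha2⟩ := halpha
      obtain ⟨hb1, hb2⟩ := hbpos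
      obtain ⟨hg1, hg2⟩ := hgnn
      have habs : ‖dotProduct (star (Aᴴ *ᵥ x)) (Aᴴ *ᵥ x)‖ ^ 2
          = (dotProduct (star (Aᴴ *ᵥ x)) (Aᴴ *ᵥ x)).re ^ 2 := by
        rw [Complex.sq_norm, Complex.normSq_apply, ← hb2]
        ring
      rw [habs] at hcs
      obtain ⟨hd1, hd2⟩ := hAy
      refine ⟨?_, ?_⟩
      · nlinarith [hcs, ha1, hb1, hd1]
      · linarith [ha2, hb2]

lemma hua_eigen {n : ℕ} {M : Matrix (Fin n) (Fin n) ℂ} (hM : M.PosSemidef) :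
    ∃ μ : Fin n → ℝ, (∀ i, 0 ≤ μ i) ∧ M.det = ((∏ i, μ i : ℝ) : ℂ) ∧
      (1 + M).det = ((∏ i, (1 + μ i) : ℝ) : ℂ) := by
  refine ⟨hM.1.eigenvalues, fun i => hM.eigenvalues_nonneg i, ?_, ?_⟩
  · rw [hM.1.det_eq_prod_eigenvalues]
    push_cast
    rfl
  · have hspec := hM.1.spectral_theorem
    rw [Unitary.conjStarAlgAut_apply] at hspec
    set U : Matrix (Fin n) (Fin n) ℂ := (hM.1.eigenvectorUnitary : Matrix (Fin n) (Fin n) ℂ)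
      with hUdef
    have hU : U * star U = 1 := Matrix.mem_unitaryGroup_iff.mp hM.1.eigenvectorUnitary.2
    have h1 : (1 : Matrix (Fin n) (Fin n) ℂ) + M
        = U * ((1 : Matrix (Fin n) (Fin n) ℂ)
            + Matrix.diagonal (RCLike.ofReal ∘ hM.1.eigenvalues)) * star U := by
      rw [Matrix.mul_add, Matrix.add_mul, Matrix.mul_one, hU, ← hspec]
    rw [h1, Matrix.det_mul, Matrix.det_mul, mul_right_comm, ← Matrix.det_mul, hU,
      Matrix.det_one, one_mul]
    rw [← Matrix.diagonal_one, Matrix.diagonal_add, Matrix.det_diagonal]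
    push_cast
    rfl

open scoped MatrixOrder in
lemma hua_det_add {n : ℕ} {P Q : Matrix (Fin n) (Fin n) ℂ}
    (hP : P.PosDef) (hQ : Q.PosSemidef) :
    P.det.re + Q.det.re + ((2:ℝ) ^ n - 2) * Real.sqrt (P.det.re * Q.det.re)
      ≤ ((P + Q).det).re := by
  have hPsd := hP.posSemidef
  set R := CFC.sqrt P with hRdef
  have hRR : R * R = P := CFC.sqrt_mul_sqrt_self P hPsd.nonneg
  have hRH : R.IsHermitian := (CFC.sqrt_nonneg P).posSemidef.1
  obtain ⟨hPdet_eq, hPdet_pos⟩ := hua_real_of_pos hP.det_pos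
  have hRdet : R.det * R.det = P.det := by rw [← Matrix.det_mul, hRR]
  have hRdet_ne : R.det ≠ 0 := by
    intro h
    rw [h, mul_zero] at hRdet
    exact (hua_real_of_pos hP.det_pos).2.ne (by rw [← hRdet]; simp)
  have hRunit : IsUnit R.det := isUnit_iff_ne_zero.mpr hRdet_ne
  set M := R⁻¹ * Q * R⁻¹ with hMdef
  have hM : M.PosSemidef := by
    have := hQ.conjTranspose_mul_mul_same (R⁻¹)
    rwa [(hRH.inv : (R⁻¹)ᴴ = R⁻¹)] at this
  have hQM : Q = R * M * R := by
    rw [hMdef]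
    rw [show R * (R⁻¹ * Q * R⁻¹) * R = (R * R⁻¹) * Q * (R⁻¹ * R) by noncomm_ring,
      Matrix.mul_nonsing_inv R hRunit, Matrix.nonsing_inv_mul R hRunit, one_mul, mul_one]
  have hPQ : P + Q = R * (1 + M) * R := by
    rw [Matrix.mul_add, Matrix.add_mul, Matrix.mul_one, hRR, ← hQM]
  obtain ⟨μ, hμ0, hMdet, hM1det⟩ := hua_eigen hM
  have hprodnn : 0 ≤ ∏ i, μ i := Finset.prod_nonneg fun i _ => hμ0 i
  have hQdet : Q.det = ((P.det.re * ∏ i, μ i : ℝ) : ℂ) := by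
    rw [hQM, Matrix.det_mul, Matrix.det_mul, mul_right_comm, ← Matrix.det_mul, hRR, hMdet,
      hPdet_eq]
    simp only [Complex.ofReal_re]
    push_cast
    ring
  have hPQdet : (P + Q).det = ((P.det.re * ∏ i, (1 + μ i) : ℝ) : ℂ) := by
    rw [hPQ, Matrix.det_mul, Matrix.det_mul, mul_right_comm, ← Matrix.det_mul, hRR, hM1det,
      hPdet_eq]
    simp only [Complex.ofReal_re]
    push_cast
    ring
  have hQre : Q.det.re = P.det.re * ∏ i, μ i := by rw [hQdet, Complex.ofReal_re]
  have hPQre : ((P + Q).det).re = P.det.re * ∏ i, (1 + μ i) := by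
    rw [hPQdet, Complex.ofReal_re]
  rw [hQre, hPQre]
  have hprod := hua_prod_one_add_ge Finset.univ μ (fun i _ => hμ0 i)
  rw [Finset.card_univ, Fintype.card_fin] at hprod
  have hsqrt : Real.sqrt (P.det.re * (P.det.re * ∏ i, μ i))
      = P.det.re * Real.sqrt (∏ i, μ i) := by
    rw [show P.det.re * (P.det.re * ∏ i, μ i) = (P.det.re) ^ 2 * ∏ i, μ i by ring,
      Real.sqrt_mul (sq_nonneg _), Real.sqrt_sq hPdet_pos.le]
  rw [hsqrt]
  have := mul_le_mul_of_nonneg_left hprod hPdet_pos.le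
  nlinarith [this]

theorem hua_det_strengthened (n : ℕ) (A B : Matrix (Fin n) (Fin n) ℂ)
    (hA : (1 - Aᴴ * A).PosDef) (hB : (1 - Bᴴ * B).PosDef) :
    ‖(1 - Aᴴ * B).det‖ ^ 2 ≥
      ((1 - Aᴴ * A).det).re * ((1 - Bᴴ * B).det).re +
        ‖(A - B).det‖ ^ 2 +
        ((2 : ℝ) ^ n - 2) *
          Real.sqrt (((1 - Aᴴ * A).det).re * ((1 - Bᴴ * B).det).re) *
          ‖(A - B).det‖ := by
  obtain ⟨hadet_eq, hadet_pos⟩ := hua_real_of_pos hA.det_pos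
  obtain ⟨hbdet_eq, hbdet_pos⟩ := hua_real_of_pos hB.det_pos
  set a := ((1 - Aᴴ * A).det).re with hadef
  set b := ((1 - Bᴴ * B).det).re with hbdef
  set c := ‖(A - B).det‖ with hcdef
  set d := ‖(1 - Aᴴ * B).det‖ with hddef
  have hc0 : 0 ≤ c := norm_nonneg _
  have hG : (1 - A * Aᴴ).PosDef := hua_flip hA
  have hGdet : (1 - A * Aᴴ).det = ((a : ℝ) : ℂ) := by
    rw [Matrix.det_one_sub_mul_comm, hadet_eq]
  have hGunit : IsUnit (1 - A * Aᴴ).det := by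
    rw [hGdet]
    exact isUnit_iff_ne_zero.mpr (by exact_mod_cast hadet_pos.ne')
  have hTG : (1 - A * Aᴴ)⁻¹ * (1 - A * Aᴴ) = 1 := Matrix.nonsing_inv_mul _ hGunit
  have hGT : (1 - A * Aᴴ) * (1 - A * Aᴴ)⁻¹ = 1 := Matrix.mul_nonsing_inv _ hGunit
  have hS : (1 - Aᴴ * A)⁻¹ = 1 + Aᴴ * (1 - A * Aᴴ)⁻¹ * A := by
    apply Matrix.inv_eq_left_inv
    calc (1 + Aᴴ * (1 - A * Aᴴ)⁻¹ * A) * (1 - Aᴴ * A)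
        = 1 - Aᴴ * A + Aᴴ * ((1 - A * Aᴴ)⁻¹ * (1 - A * Aᴴ)) * A := by noncomm_ring
      _ = 1 := by rw [hTG]; noncomm_ring
  have hconj : (1 - Aᴴ * B)ᴴ = 1 - Bᴴ * A := by
    simp [Matrix.conjTranspose_sub, Matrix.conjTranspose_mul]
  have hCconj : (A - B)ᴴ = Aᴴ - Bᴴ := Matrix.conjTranspose_sub _ _
  have hua_id : (1 - Aᴴ * B)ᴴ * (1 - Aᴴ * A)⁻¹ * (1 - Aᴴ * B)
      = (1 - Bᴴ * B) + (A - B)ᴴ * (1 - A * Aᴴ)⁻¹ * (A - B) := by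
    rw [hconj, hCconj, hS]
    calc (1 - Bᴴ * A) * (1 + Aᴴ * (1 - A * Aᴴ)⁻¹ * A) * (1 - Aᴴ * B)
        = (1 - Bᴴ * A) * (1 - Aᴴ * B)
          + ((1 - Bᴴ * A) * Aᴴ) * (1 - A * Aᴴ)⁻¹ * (A * (1 - Aᴴ * B)) := by noncomm_ring
      _ = (1 - Bᴴ * A) * (1 - Aᴴ * B)
          + ((Aᴴ - Bᴴ) + Bᴴ * (1 - A * Aᴴ)) * (1 - A * Aᴴ)⁻¹
            * ((A - B) + (1 - A * Aᴴ) * B) := by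
          rw [show (1 - Bᴴ * A) * Aᴴ = (Aᴴ - Bᴴ) + Bᴴ * (1 - A * Aᴴ) by noncomm_ring,
            show A * (1 - Aᴴ * B) = (A - B) + (1 - A * Aᴴ) * B by noncomm_ring]
      _ = (1 - Bᴴ * A) * (1 - Aᴴ * B)
          + ((Aᴴ - Bᴴ) * (1 - A * Aᴴ)⁻¹ * (A - B)
            + (Aᴴ - Bᴴ) * ((1 - A * Aᴴ)⁻¹ * (1 - A * Aᴴ)) * B
            + Bᴴ * ((1 - A * Aᴴ) * (1 - A * Aᴴ)⁻¹) * (A - B)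
            + Bᴴ * ((1 - A * Aᴴ) * ((1 - A * Aᴴ)⁻¹ * (1 - A * Aᴴ))) * B) := by noncomm_ring
      _ = (1 - Bᴴ * B) + (Aᴴ - Bᴴ) * (1 - A * Aᴴ)⁻¹ * (A - B) := by
          rw [hTG, hGT]
          noncomm_ring
  set Q := (A - B)ᴴ * (1 - A * Aᴴ)⁻¹ * (A - B) with hQdef
  have hQpsd : Q.PosSemidef := (hG.inv).posSemidef.conjTranspose_mul_mul_same (A - B)
  have hmain := hua_det_add hB hQpsd
  have hdet1 : ((1 - Bᴴ * B) + Q).det = ((d ^ 2 * a⁻¹ : ℝ) : ℂ) := by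
    rw [← hua_id, Matrix.det_mul, Matrix.det_mul, Matrix.det_conjTranspose,
      Matrix.det_nonsing_inv, Ring.inverse_eq_inv, hadet_eq]
    rw [show star ((1 - Aᴴ * B).det) * (((a : ℝ) : ℂ))⁻¹ * (1 - Aᴴ * B).det
        = ((1 - Aᴴ * B).det * star ((1 - Aᴴ * B).det)) * (((a : ℝ) : ℂ))⁻¹ by ring]
    rw [Complex.star_def, Complex.mul_conj, Complex.normSq_eq_norm_sq, hddef]
    push_cast
    ring
  have hdetQ : Q.det = ((c ^ 2 * a⁻¹ : ℝ) : ℂ) := by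
    rw [hQdef, Matrix.det_mul, Matrix.det_mul, Matrix.det_conjTranspose,
      Matrix.det_nonsing_inv, Ring.inverse_eq_inv, hGdet]
    rw [show star ((A - B).det) * (((a : ℝ) : ℂ))⁻¹ * (A - B).det
        = ((A - B).det * star ((A - B).det)) * (((a : ℝ) : ℂ))⁻¹ by ring]
    rw [Complex.star_def, Complex.mul_conj, Complex.normSq_eq_norm_sq, hcdef]
    push_cast
    ring
  rw [hdet1, hdetQ] at hmain
  simp only [Complex.ofReal_re] at hmain
  have hsqrt : Real.sqrt (b * (c ^ 2 * a⁻¹)) = Real.sqrt (a * b) * c * a⁻¹ := by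
    rw [show b * (c ^ 2 * a⁻¹) = (Real.sqrt (a * b) * c * a⁻¹) ^ 2 by
      rw [mul_pow, mul_pow, Real.sq_sqrt (mul_nonneg hadet_pos.le hbdet_pos.le)]
      field_simp]
    exact Real.sqrt_sq (by positivity)
  rw [hsqrt] at hmain
  have hstep := mul_le_mul_of_nonneg_right hmain hadet_pos.le
  have hL : (b + c ^ 2 * a⁻¹ + ((2:ℝ) ^ n - 2) * (Real.sqrt (a * b) * c * a⁻¹)) * a
      = a * b + c ^ 2 + ((2:ℝ) ^ n - 2) * Real.sqrt (a * b) * c := by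
    linear_combination (c ^ 2 + ((2:ℝ) ^ n - 2) * Real.sqrt (a * b) * c) *
      inv_mul_cancel₀ hadet_pos.ne'
  have hR : d ^ 2 * a⁻¹ * a = d ^ 2 := by
    linear_combination d ^ 2 * inv_mul_cancel₀ hadet_pos.ne'
  rw [hL, hR] at hstep
  linarith [hstep]
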